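/- Let A, B, C, D be real numbers with A > 0 and B > 0, and let β ≠ 0 be real. Then the equation A·t·exp(β t) + B·exp(β t) + C·t + D = 0 has at most 3 real solutions t. Consequently, if A k e^{kβ} + B e^{kβ} + C k + D = 0 holds for all integers k with 0 ≤ k ≤ K where K ≥ 3, then β = 0. -/

import Mathlib

open Real Set

/-- For A, B > 0 and β ≠ 0, the equation A t e^{βt} + B e^{βt} + C t + D = 0 has at most
3 real solutions; consequently if it holds at all integers 0 ≤ k ≤ K with K ≥ 3 then β = 0. -/
theorem at_most_three_roots_and_beta_eq_zero
    (A B C D β : ℝ) (hA : 0 < A) (hB : 0 < B) :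
    (β ≠ 0 → {t : ℝ | A * t * exp (β * t) + B * exp (β * t) + C * t + D = 0}.encard ≤ 3) ∧
    (∀ K : ℕ, 3 ≤ K →
      (∀ k : ℕ, k ≤ K →
        A * k * exp (β * k) + B * exp (β * k) + C * k + D = 0) → β = 0) := by
  set S : Set ℝ := {t : ℝ | A * t * exp (β * t) + B * exp (β * t) + C * t + D = 0} with hS
  set f : ℝ → ℝ := fun t => A * t * exp (β * t) + B * exp (β * t) + C * t + D with hfdef
  set f1 : ℝ → ℝ := fun t => (A * β * t + (A + B * β)) * exp (β * t) + C with hf1def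
  set f2 : ℝ → ℝ := fun t => (A * β * β * t + (2 * A * β + B * β * β)) * exp (β * t) with hf2def
  have he : ∀ t : ℝ, HasDerivAt (fun x => exp (β * x)) (β * exp (β * t)) t := by
    intro t
    have h1 : HasDerivAt (fun x : ℝ => β * x) β t := by
      simpa using (hasDerivAt_id t).const_mul β
    exact ((Real.hasDerivAt_exp (β * t)).comp t h1).congr_deriv (mul_comm _ _)
  have hd1 : ∀ t, HasDerivAt f (f1 t) t := by
    intro t
    have h := (((((hasDerivAt_id t).const_mul A).mul (he t)).add
      ((he t).const_mul B)).add ((hasDerivAt_id t).const_mul C)).add_const D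
    refine h.congr_deriv ?_
    simp [hf1def]; ring
  have hd2 : ∀ t, HasDerivAt f1 (f2 t) t := by
    intro t
    have h := ((((hasDerivAt_id t).const_mul (A * β)).add_const (A + B * β)).mul
      (he t)).add_const C
    refine h.congr_deriv ?_
    simp [hf2def]; ring
  -- the main finiteness claim
  have part1 : β ≠ 0 → S.encard ≤ 3 := by
    intro hβ
    have hAβ2 : A * β * β ≠ 0 := mul_ne_zero (mul_ne_zero hA.ne' hβ) hβ
    have huniq : ∀ u v : ℝ, f2 u = 0 → f2 v = 0 → u = v := by
      intro u v hu hv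
      have hu' : A * β * β * u + (2 * A * β + B * β * β) = 0 := by
        rcases mul_eq_zero.1 hu with h | h
        · exact h
        · exact absurd h (exp_ne_zero _)
      have hv' : A * β * β * v + (2 * A * β + B * β * β) = 0 := by
        rcases mul_eq_zero.1 hv with h | h
        · exact h
        · exact absurd h (exp_ne_zero _)
      have : A * β * β * u = A * β * β * v := by linarith
      exact mul_left_cancel₀ hAβ2 this
    have rolle : ∀ (g g' : ℝ → ℝ), (∀ t, HasDerivAt g (g' t) t) →
        ∀ a b : ℝ, a < b → g a = g b → ∃ c, a < c ∧ c < b ∧ g' c = 0 := by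
      intro g g' hg a b hab heq
      have hc : ContinuousOn g (Icc a b) :=
        (continuous_iff_continuousAt.2 fun t => (hg t).continuousAt).continuousOn
      obtain ⟨c, hc1, hc2⟩ := exists_deriv_eq_zero hab hc heq
      refine ⟨c, hc1.1, hc1.2, ?_⟩
      rwa [(hg c).deriv] at hc2
    by_contra hcard
    push_neg at hcard
    have h4 : (4 : ℕ∞) ≤ S.encard := Order.add_one_le_of_lt hcard
    obtain ⟨s, hsub, hs4⟩ := Set.exists_subset_encard_eq h4
    have hfin : s.Finite := Set.finite_of_encard_eq_coe (k := 4) (by exact_mod_cast hs4)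
    have hFc : hfin.toFinset.card = 4 := by
      have := hfin.encard_eq_coe_toFinset_card
      rw [hs4] at this
      exact_mod_cast this.symm
    set e := hfin.toFinset.orderIsoOfFin hFc with hedef
    have hmem : ∀ i : Fin 4, ((e i : ℝ)) ∈ S := fun i =>
      hsub (hfin.mem_toFinset.1 (e i).2)
    have hlt : ∀ i j : Fin 4, i < j → ((e i : ℝ)) < e j := by
      intro i j hij
      exact_mod_cast e.strictMono hij
    have hroot : ∀ i : Fin 4, f ((e i : ℝ)) = 0 := fun i => hmem i
    obtain ⟨p, hp1, hp2, hp0⟩ := rolle f f1 hd1 _ _ (hlt 0 1 (by decide))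
      ((hroot 0).trans (hroot 1).symm)
    obtain ⟨q, hq1, hq2, hq0⟩ := rolle f f1 hd1 _ _ (hlt 1 2 (by decide))
      ((hroot 1).trans (hroot 2).symm)
    obtain ⟨r, hr1, hr2, hr0⟩ := rolle f f1 hd1 _ _ (hlt 2 3 (by decide))
      ((hroot 2).trans (hroot 3).symm)
    have hpq : p < q := hp2.trans hq1
    have hqr : q < r := hq2.trans hr1
    obtain ⟨u, hu1, hu2, hu0⟩ := rolle f1 f2 hd2 _ _ hpq (hp0.trans hq0.symm)
    obtain ⟨v, hv1, hv2, hv0⟩ := rolle f1 f2 hd2 _ _ hqr (hq0.trans hr0.symm)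
    have huv : u < v := hu2.trans hv1
    exact absurd (huniq u v hu0 hv0) huv.ne
  refine ⟨part1, ?_⟩
  intro K hK hroots
  by_contra hβ
  have hle := part1 hβ
  have hmem : ∀ k : ℕ, k ≤ 3 → ((k : ℝ)) ∈ S := by
    intro k hk
    exact hroots k (hk.trans hK)
  have hsub : ({0, 1, 2, 3} : Set ℝ) ⊆ S := by
    intro x hx
    rcases hx with rfl | rfl | rfl | rfl
    · simpa using hmem 0 (by norm_num)
    · simpa using hmem 1 (by norm_num)
    · simpa using hmem 2 (by norm_num)
    · simpa using hmem 3 (by norm_num)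
  have h4 : ({0, 1, 2, 3} : Set ℝ).encard = 4 := by
    rw [Set.encard_insert_of_notMem (by norm_num),
      Set.encard_insert_of_notMem (by norm_num),
      Set.encard_insert_of_notMem (by norm_num), Set.encard_singleton]
    rfl
  have := (h4 ▸ Set.encard_le_encard hsub).trans hle
  norm_num at this
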